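/- An object of the category HAsm of Herbrand assemblies over K₁ is projective with respect to regular epimorphisms if and only if it is isomorphic to a partitioned Herbrand assembly. -/

import Mathlib

open CategoryTheory Encodable Denumerable

namespace Herbrand

/-- Kleene application in Kleene's first pca `K₁`: `e · n`. -/
def kap (e n : ℕ) : Part ℕ := Nat.Partrec.Code.eval (ofNat Nat.Partrec.Code e) n

/-- `kapIn r n S` : `r · n` is defined and its value lies in `S`. -/
def kapIn (r n : ℕ) (S : Set ℕ) : Prop := ∃ v ∈ kap r n, v ∈ S

/-- The list coded by a natural number (canonical bijection `ℕ ≃ List ℕ`). -/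
def toL (n : ℕ) : List ℕ := ofNat (List ℕ) n

/-- The code of a list of natural numbers. -/
def ofL (l : List ℕ) : ℕ := encode l

@[simp] lemma toL_ofL (l : List ℕ) : toL (ofL l) = l := ofNat_encode l

/-- `!A` : the set of codes of lists all of whose entries lie in `A`. -/
def bang (A : Set ℕ) : Set ℕ := {n | ∀ x ∈ toL n, x ∈ A}

/-- `m ⪯ n` : every entry of the list coded by `m` is an entry of the list coded by `n`. -/
def sle (m n : ℕ) : Prop := ∀ x ∈ toL m, x ∈ toL n

lemma sle_refl (m : ℕ) : sle m m := fun _ hx => hx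

lemma sle_trans {m n k : ℕ} (h1 : sle m n) (h2 : sle n k) : sle m k :=
  fun x hx => h2 x (h1 x hx)

/-- `S` is upward closed in `!A`. -/
def UpwardClosedIn (A S : Set ℕ) : Prop :=
  ∀ m ∈ S, ∀ n ∈ bang A, sle m n → n ∈ S

/-- `↑_{!A} S` : the set of `n ∈ !A` with `m ⪯ n` for some `m ∈ S`. -/
def upClo (A S : Set ℕ) : Set ℕ := {n | n ∈ bang A ∧ ∃ m ∈ S, sle m n}

lemma mem_bang_univ (n : ℕ) : n ∈ bang Set.univ := fun x _ => Set.mem_univ x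

/-- From a partial recursive function we get a `K₁`-code for it. -/
theorem exists_kap_eq {f : ℕ →. ℕ} (hf : Nat.Partrec f) : ∃ e, ∀ n, kap e n = f n := by
  obtain ⟨c, hc⟩ := Nat.Partrec.Code.exists_code.mp hf
  exact ⟨encode c, fun n => by simp [kap, hc]⟩


/-- A Herbrand assembly over `K₁`. -/
structure HAsmObj where
  carrier : Type
  real : Set ℕ
  rz : carrier → Set ℕ
  rz_sub : ∀ a, rz a ⊆ bang real
  rz_ne : ∀ a, (rz a).Nonempty
  rz_up : ∀ a, UpwardClosedIn real (rz a)

/-- `r ∈ ℕ` tracks the function `f` between the underlying sets of two Herbrand assemblies. -/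
def Tracks (B A : HAsmObj) (f : B.carrier → A.carrier) (r : ℕ) : Prop :=
  (∀ m ∈ bang B.real, kapIn r m (bang A.real)) ∧
  ∀ b : B.carrier, ∀ m ∈ B.rz b, kapIn r m (A.rz (f b))

/-- A morphism of Herbrand assemblies: a tracked function. -/
structure HHom (B A : HAsmObj) where
  toFun : B.carrier → A.carrier
  tracked : ∃ r, Tracks B A toFun r

theorem HHom.ext' {B A : HAsmObj} {f g : HHom B A} (h : f.toFun = g.toFun) : f = g := by
  cases f; cases g; simpa using h

theorem tracks_id_fun (B A : HAsmObj) (f : B.carrier → A.carrier)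
    (h1 : ∀ m ∈ bang B.real, m ∈ bang A.real)
    (h2 : ∀ b : B.carrier, ∀ m ∈ B.rz b, m ∈ A.rz (f b)) : ∃ r, Tracks B A f r := by
  obtain ⟨e, he⟩ := exists_kap_eq (Nat.Partrec.of_primrec Nat.Primrec.id)
  exact ⟨e, fun m hm => ⟨m, by simp [he], h1 m hm⟩,
    fun b m hm => ⟨m, by simp [he], h2 b m hm⟩⟩

theorem tracked_id (A : HAsmObj) : ∃ r, Tracks A A id r :=
  tracks_id_fun A A id (fun _ h => h) (fun _ _ h => h)

theorem tracked_comp {C B A : HAsmObj} {f : C.carrier → B.carrier} {g : B.carrier → A.carrier}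
    (hf : ∃ r, Tracks C B f r) (hg : ∃ s, Tracks B A g s) : ∃ t, Tracks C A (g ∘ f) t := by
  obtain ⟨r, hr1, hr2⟩ := hf
  obtain ⟨s, hs1, hs2⟩ := hg
  refine ⟨encode (Nat.Partrec.Code.comp (ofNat Nat.Partrec.Code s) (ofNat Nat.Partrec.Code r)),
    ?_, ?_⟩
  · intro m hm
    obtain ⟨v, hv, hv'⟩ := hr1 m hm
    obtain ⟨w, hw, hw'⟩ := hs1 v hv'
    exact ⟨w, by simp only [kap, Denumerable.ofNat_encode, Nat.Partrec.Code.eval]; exact Part.mem_bind_iff.mpr ⟨v, hv, hw⟩, hw'⟩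
  · intro c m hm
    obtain ⟨v, hv, hv'⟩ := hr2 c m hm
    obtain ⟨w, hw, hw'⟩ := hs2 (f c) v hv'
    exact ⟨w, by simp only [kap, Denumerable.ofNat_encode, Nat.Partrec.Code.eval]; exact Part.mem_bind_iff.mpr ⟨v, hv, hw⟩, hw'⟩

/-- The category `HAsm` of Herbrand assemblies over `K₁`. -/
instance : Category HAsmObj where
  Hom B A := HHom B A
  id A := ⟨id, tracked_id A⟩
  comp f g := ⟨g.toFun ∘ f.toFun, tracked_comp f.tracked g.tracked⟩
  id_comp f := HHom.ext' rfl
  comp_id f := HHom.ext' rfl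
  assoc f g h := HHom.ext' rfl


/-- The Herbrand assembly `∇X = (X, ℕ, x ↦ !ℕ)`. -/
def nablaObj (X : Type) : HAsmObj where
  carrier := X
  real := Set.univ
  rz _ := bang Set.univ
  rz_sub _ := fun _ h => h
  rz_ne _ := ⟨0, mem_bang_univ 0⟩
  rz_up _ := fun _ _ n hn _ => hn

/-- The functor `∇ : Set → HAsm`. -/
def Nabla : Type ⥤ HAsmObj where
  obj := nablaObj
  map f := ⟨f, tracks_id_fun _ _ f (fun _ h => h) (fun _ _ h => h)⟩
  map_id _ := HHom.ext' rfl
  map_comp _ _ := HHom.ext' rfl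

/-- The underlying-set functor `Γ : HAsm → Set`. -/
def Gamma : HAsmObj ⥤ Type where
  obj A := A.carrier
  map f := TypeCat.ofHom f.toFun

/-- The realizability structure of the natural numbers object: `ν n = ↑_{!ℕ} {⟨n⟩}`. -/
def nuN (n : ℕ) : Set ℕ := upClo Set.univ {ofL [n]}

/-- The natural numbers object `N = (ℕ, ℕ, ν)` of `HAsm`. -/
def NObj : HAsmObj where
  carrier := ℕ
  real := Set.univ
  rz := nuN
  rz_sub _ := fun _ hm => hm.1
  rz_ne n := ⟨ofL [n], mem_bang_univ _, ofL [n], rfl, sle_refl _⟩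
  rz_up _ := fun m hm k hk hmk => ⟨hk, hm.2.choose, hm.2.choose_spec.1,
    sle_trans hm.2.choose_spec.2 hmk⟩

/-- The terminal object `1 = ({*}, ℕ, * ↦ !ℕ)` of `HAsm`. -/
def oneObj : HAsmObj := nablaObj PUnit

/-- The zero morphism `0 : 1 ⟶ N`. -/
def zeroH : oneObj ⟶ NObj := by
  refine ⟨fun _ => (0 : ℕ), ?_⟩
  obtain ⟨e, he⟩ := exists_kap_eq (Nat.Partrec.of_primrec (Nat.Primrec.const (ofL [0])))
  exact ⟨e, fun m _ => ⟨ofL [0], by simp [he], mem_bang_univ _⟩,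
    fun b m _ => ⟨ofL [0], by simp [he], mem_bang_univ _, ofL [0], rfl, sle_refl _⟩⟩

/-- The successor morphism `s : N ⟶ N`. -/
def succH : NObj ⟶ NObj := by
  refine ⟨(Nat.succ : ℕ → ℕ), ?_⟩
  have hp : Primrec (fun m : ℕ => ofL ((toL m).map Nat.succ)) :=
    Primrec.encode.comp ((Primrec.ofNat (List ℕ)).list_map
      ((Primrec.succ.comp Primrec.snd).to₂))
  obtain ⟨e, he⟩ := exists_kap_eq (Nat.Partrec.of_primrec (Primrec.nat_iff.mp hp))
  refine ⟨e, fun m _ => ⟨ofL ((toL m).map Nat.succ), by simp [he], mem_bang_univ _⟩, ?_⟩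
  rintro (n : ℕ) m hm
  refine ⟨ofL ((toL m).map Nat.succ), by simp [he], mem_bang_univ _, ofL [n + 1], rfl, ?_⟩
  intro x hx
  have hn : n ∈ toL m := hm.2.choose_spec.2 n (by
    have : hm.2.choose = ofL [n] := hm.2.choose_spec.1
    rw [this]; simp)
  have hx' : x = n + 1 := by simpa using hx
  subst hx'
  simp only [toL_ofL, List.mem_map]
  exact ⟨n, hn, rfl⟩


/-- A partitioned Herbrand assembly. -/
def Partitioned (A : HAsmObj) : Prop :=
  ∀ a : A.carrier, ∃ g : ℕ, A.rz a = upClo A.real {ofL [g]}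

/-! ### Auxiliary lemmas -/

lemma partrec_kap (t : ℕ) : Partrec (kap t) :=
  Partrec.nat_iff.mpr (Nat.Partrec.Code.exists_code.mpr ⟨_, rfl⟩)

lemma exists_code_comp (t : ℕ) {g : ℕ → ℕ} (hg : Computable g) :
    ∃ c, ∀ n, kap c n = kap t (g n) :=
  exists_kap_eq (Partrec.nat_iff.mp ((partrec_kap t).comp hg))

lemma singleton_mem_bang {A : Set ℕ} {x : ℕ} (hx : x ∈ A) : ofL [x] ∈ bang A := by
  intro y hy
  simp only [toL_ofL, List.mem_singleton] at hy
  subst hy; exact hx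

lemma sle_singleton_iff {g n : ℕ} : sle (ofL [g]) n ↔ g ∈ toL n := by
  constructor
  · intro h; exact h g (by simp)
  · intro h x hx
    simp only [toL_ofL, List.mem_singleton] at hx
    subst hx; exact h

lemma mem_upClo_singleton {A : Set ℕ} {g n : ℕ} :
    n ∈ upClo A {ofL [g]} ↔ n ∈ bang A ∧ g ∈ toL n := by
  constructor
  · rintro ⟨h1, m, hm, h2⟩
    rw [Set.mem_singleton_iff] at hm
    subst hm
    exact ⟨h1, sle_singleton_iff.mp h2⟩
  · rintro ⟨h1, h2⟩
    exact ⟨h1, ofL [g], rfl, sle_singleton_iff.mpr h2⟩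

lemma upClo_upward {A S : Set ℕ} : UpwardClosedIn A (upClo A S) := by
  rintro m ⟨hm, m0, hm0, hle⟩ n hn hmn
  exact ⟨hn, m0, hm0, sle_trans hle hmn⟩
/-- One step of the concatenation tracker. -/
def step (t e i x : ℕ) : Part ℕ :=
  (kap t (ofL [x])).bind fun y => (kap e y).map fun z => ofL (toL i ++ toL z)

/-- Partial concatenation over the first `k` entries. -/
def trkRec (t e m : ℕ) : ℕ → Part ℕ := fun k =>
  k.rec (Part.some (ofL ([] : List ℕ)))
    (fun y IH => IH.bind fun i => step t e i ((toL m).getD y 0))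

/-- The concatenation tracker. -/
def trk (t e : ℕ) : ℕ →. ℕ := fun m => trkRec t e m (toL m).length

lemma partrec_trk (t e : ℕ) : Partrec (trk t e) := by
  have hf : Computable fun m : ℕ => (toL m).length :=
    (Primrec.list_length.comp (Primrec.ofNat (List ℕ))).to_comp
  have hg : Partrec fun _ : ℕ => (Part.some (ofL ([] : List ℕ))) :=
    (Computable.const (ofL ([] : List ℕ))).partrec
  have hh : Partrec₂ fun (m : ℕ) (p : ℕ × ℕ) => step t e p.2 ((toL m).getD p.1 0) := by
    have hA : Computable fun q : ℕ × (ℕ × ℕ) => ofL [(toL q.1).getD q.2.1 0] := by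
      have : Primrec fun q : ℕ × (ℕ × ℕ) => ofL [(toL q.1).getD q.2.1 0] :=
        Primrec.encode.comp ((Primrec.list_cons (α := ℕ)).comp
          ((Primrec.list_getD 0).comp ((Primrec.ofNat (List ℕ)).comp Primrec.fst)
            (Primrec.fst.comp Primrec.snd)) (Primrec.const []))
      exact this.to_comp
    have hg2 : Computable₂ fun (q : (ℕ × (ℕ × ℕ)) × ℕ) (z : ℕ) =>
        ofL (toL q.1.2.2 ++ toL z) := by
      have : Primrec fun p : ((ℕ × (ℕ × ℕ)) × ℕ) × ℕ => ofL (toL p.1.1.2.2 ++ toL p.2) :=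
        Primrec.encode.comp ((Primrec.list_append (α := ℕ)).comp
          ((Primrec.ofNat (List ℕ)).comp
            (Primrec.snd.comp (Primrec.snd.comp (Primrec.fst.comp Primrec.fst))))
          ((Primrec.ofNat (List ℕ)).comp Primrec.snd))
      exact this.to₂.to_comp
    have hbig : Partrec fun q : ℕ × (ℕ × ℕ) =>
        (kap t (ofL [(toL q.1).getD q.2.1 0])).bind fun y =>
          (kap e y).map fun z => ofL (toL q.2.2 ++ toL z) :=
      ((partrec_kap t).comp hA).bind
        (((partrec_kap e).comp Computable.snd).map hg2).to₂
    exact hbig.to₂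
  have := Partrec.nat_rec hf hg hh
  exact this.of_eq fun m => rfl

lemma trkRec_spec {t e : ℕ} {R S T : Set ℕ}
    (ht : ∀ x ∈ R, kapIn t (ofL [x]) (bang S))
    (he : ∀ y ∈ bang S, kapIn e y (bang T)) {m : ℕ} (hm : m ∈ bang R) :
    ∀ k, k ≤ (toL m).length → ∃ v ∈ trkRec t e m k, v ∈ bang T ∧
      ∀ j < k, ∀ y ∈ kap t (ofL [(toL m).getD j 0]), ∀ z ∈ kap e y, sle z v := by
  intro k
  induction k with
  | zero =>
    intro _
    refine ⟨ofL [], Part.mem_some _, ?_, ?_⟩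
    · intro x hx; simp only [toL_ofL] at hx; exact absurd hx List.not_mem_nil
    · intro j hj; omega
  | succ k IH =>
    intro hk
    obtain ⟨i, hi, hiT, hij⟩ := IH (by omega)
    have hkl : k < (toL m).length := by omega
    set x := (toL m).getD k 0 with hxdef
    have hxmem : x ∈ toL m := by
      rw [hxdef, List.getD_eq_getElem (toL m) 0 hkl]
      exact List.getElem_mem hkl
    obtain ⟨y, hy, hyS⟩ := ht x (hm x hxmem)
    obtain ⟨z, hz, hzT⟩ := he y hyS
    refine ⟨ofL (toL i ++ toL z), ?_, ?_, ?_⟩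
    · show _ ∈ (trkRec t e m k).bind fun i => step t e i ((toL m).getD k 0)
      rw [Part.mem_bind_iff]
      refine ⟨i, hi, ?_⟩
      rw [← hxdef]
      show _ ∈ (kap t (ofL [x])).bind fun y => (kap e y).map fun z => ofL (toL i ++ toL z)
      rw [Part.mem_bind_iff]
      exact ⟨y, hy, (Part.mem_map_iff _).mpr ⟨z, hz, rfl⟩⟩
    · intro w hw
      rw [toL_ofL, List.mem_append] at hw
      rcases hw with hw | hw
      · exact hiT w hw
      · exact hzT w hw
    · intro j hj y' hy' z' hz'
      rcases Nat.lt_succ_iff_lt_or_eq.mp hj with hj | hj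
      · intro w hw
        have := hij j hj y' hy' z' hz' w hw
        rw [toL_ofL, List.mem_append]; exact Or.inl this
      · subst hj
        rw [← hxdef] at hy'
        have hyy : y' = y := Part.mem_unique hy' hy
        subst hyy
        have hzz : z' = z := Part.mem_unique hz' hz
        subst hzz
        intro w hw
        rw [toL_ofL, List.mem_append]; exact Or.inr hw

lemma trk_spec {t e : ℕ} {R S T : Set ℕ}
    (ht : ∀ x ∈ R, kapIn t (ofL [x]) (bang S))
    (he : ∀ y ∈ bang S, kapIn e y (bang T)) {m : ℕ} (hm : m ∈ bang R) :
    ∃ v ∈ trk t e m, v ∈ bang T ∧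
      ∀ x ∈ toL m, ∀ y ∈ kap t (ofL [x]), ∀ z ∈ kap e y, sle z v := by
  obtain ⟨v, hv, hvT, hkey⟩ := trkRec_spec ht he hm (toL m).length le_rfl
  refine ⟨v, hv, hvT, ?_⟩
  intro x hx
  obtain ⟨j, hj, hjx⟩ := List.mem_iff_getElem.mp hx
  have : (toL m).getD j 0 = x := by
    rw [List.getD_eq_getElem (toL m) 0 hj, hjx]
  rw [← this]
  exact hkey j hj
/-- The canonical quotient structure on the codomain of `p`. -/
def quotObj {B A : HAsmObj} (p : B ⟶ A) (hs : Function.Surjective p.toFun) : HAsmObj where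
  carrier := A.carrier
  real := B.real
  rz a := {n | n ∈ bang B.real ∧ ∃ b, p.toFun b = a ∧ ∃ m ∈ B.rz b, sle m n}
  rz_sub _ := fun _ hn => hn.1
  rz_ne a := by
    obtain ⟨b, hb⟩ := hs a
    obtain ⟨m, hm⟩ := B.rz_ne b
    exact ⟨m, B.rz_sub b hm, b, hb, m, hm, sle_refl m⟩
  rz_up a := by
    rintro m ⟨hm, b, hb, m0, hm0, hle⟩ n hn hmn
    exact ⟨hn, b, hb, m0, hm0, sle_trans hle hmn⟩

lemma regEpi_surjective {B A : HAsmObj} (p : B ⟶ A) (hp : RegularEpi p) :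
    Function.Surjective p.toFun := by
  haveI := hp
  haveI : Epi p := RegularEpi.epi p hp
  let χ₁ : A ⟶ nablaObj Prop :=
    ⟨fun a => ∃ b, p.toFun b = a,
      tracks_id_fun A (nablaObj Prop) _ (fun m _ => mem_bang_univ m)
        (fun _ m _ => mem_bang_univ m)⟩
  let χ₂ : A ⟶ nablaObj Prop :=
    ⟨fun _ => True,
      tracks_id_fun A (nablaObj Prop) _ (fun m _ => mem_bang_univ m)
        (fun _ m _ => mem_bang_univ m)⟩
  have hcomp : p ≫ χ₁ = p ≫ χ₂ := by
    apply HHom.ext'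
    funext b
    show (∃ b', p.toFun b' = p.toFun b) = True
    simp only [eq_iff_iff, iff_true]
    exact ⟨b, rfl⟩
  have : χ₁ = χ₂ := (cancel_epi p).mp hcomp
  intro a
  have h := congrFun (congrArg HHom.toFun this) a
  show ∃ b, p.toFun b = a
  rw [show ((∃ b, p.toFun b = a) = True) from h]
  trivial

lemma regEpi_extract {B A : HAsmObj} (p : B ⟶ A) (hp : RegularEpi p) :
    ∃ e : ℕ, (∀ k ∈ bang A.real, kapIn e k (bang B.real)) ∧
      ∀ a : A.carrier, ∀ k ∈ A.rz a,
        ∃ b, p.toFun b = a ∧ ∃ v ∈ kap e k, v ∈ B.rz b := by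
  have hs := regEpi_surjective p hp
  let A' := quotObj p hs
  let p' : B ⟶ A' := ⟨p.toFun, tracks_id_fun B A' p.toFun (fun m hm => hm)
    (fun b m hm => ⟨B.rz_sub b hm, b, rfl, m, hm, sle_refl m⟩)⟩
  have w' : hp.left ≫ p' = hp.right ≫ p' := by
    apply HHom.ext'
    have := congrArg HHom.toFun hp.w
    exact this
  let s : Limits.Cofork hp.left hp.right := Limits.Cofork.ofπ p' w'
  let d : A ⟶ A' := hp.isColimit.desc s
  have hfac : p ≫ d = p' := by
    have := hp.isColimit.fac s Limits.WalkingParallelPair.one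
    exact this
  have hid : ∀ a, d.toFun a = a := by
    intro a
    obtain ⟨b, hb⟩ := hs a
    have := congrFun (congrArg HHom.toFun hfac) b
    rw [← hb]
    exact this
  obtain ⟨e, he1, he2⟩ := d.tracked
  refine ⟨e, he1, ?_⟩
  intro a k hk
  obtain ⟨v, hv, hvA'⟩ := he2 a k hk
  rw [hid a] at hvA'
  obtain ⟨hvB, b, hb, m0, hm0, hle⟩ := hvA'
  exact ⟨b, hb, v, hv, B.rz_up b m0 hm0 v hvB hle⟩

lemma partitioned_projective {P : HAsmObj} (hP : Partitioned P) {B A : HAsmObj}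
    (p : B ⟶ A) (hp : RegularEpi p) (u : P ⟶ A) : ∃ v : P ⟶ B, v ≫ p = u := by
  obtain ⟨e, he1, he2⟩ := regEpi_extract p hp
  obtain ⟨t, ht1, ht2⟩ := u.tracked
  -- the chosen data for each `a`
  have hdata : ∀ a : P.carrier, ∃ b, p.toFun b = u.toFun a ∧ ∃ g,
      P.rz a = upClo P.real {ofL [g]} ∧
      ∃ y ∈ kap t (ofL [g]), ∃ z ∈ kap e y, z ∈ B.rz b := by
    intro a
    obtain ⟨g, hg⟩ := hP a
    have hga : ofL [g] ∈ P.rz a := by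
      obtain ⟨m, hm⟩ := P.rz_ne a
      rw [hg, mem_upClo_singleton] at hm
      rw [hg, mem_upClo_singleton]
      exact ⟨singleton_mem_bang (hm.1 _ hm.2), by simp⟩
    obtain ⟨y, hy, hyA⟩ := ht2 a _ hga
    obtain ⟨b, hb, z, hz, hzB⟩ := he2 (u.toFun a) y hyA
    exact ⟨b, hb, g, hg, y, hy, z, hz, hzB⟩
  set vf : P.carrier → B.carrier := fun a => (hdata a).choose with hvf
  -- the tracker
  obtain ⟨c, hc⟩ := exists_kap_eq (Partrec.nat_iff.mp (partrec_trk t e))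
  have ht' : ∀ x ∈ P.real, kapIn t (ofL [x]) (bang A.real) :=
    fun x hx => ht1 _ (singleton_mem_bang hx)
  refine ⟨⟨vf, c, ?_, ?_⟩, ?_⟩
  · intro m hm
    obtain ⟨v, hv, hvT, _⟩ := trk_spec ht' he1 hm
    exact ⟨v, (hc m).symm ▸ hv, hvT⟩
  · intro a m hm
    have hmB : m ∈ bang P.real := P.rz_sub a hm
    obtain ⟨v, hv, hvT, hkey⟩ := trk_spec ht' he1 hmB
    obtain ⟨hb, g, hgspec, y, hy, z, hz, hzB⟩ := (hdata a).choose_spec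
    have hgmem : g ∈ toL m := by
      rw [hgspec, mem_upClo_singleton] at hm
      exact hm.2
    have hsle : sle z v := hkey _ hgmem y hy z hz
    exact ⟨v, (hc m).symm ▸ hv, B.rz_up (vf a) z hzB v hvT hsle⟩
  · apply HHom.ext'
    funext a
    exact (hdata a).choose_spec.1
/-- The canonical partitioned cover of `P`. -/
def coverObj (P : HAsmObj) : HAsmObj where
  carrier := {x : P.carrier × ℕ // x.2 ∈ P.rz x.1}
  real := bang P.real
  rz x := upClo (bang P.real) {ofL [x.1.2]}
  rz_sub _ := fun _ hn => hn.1
  rz_ne x := ⟨ofL [x.1.2], singleton_mem_bang (P.rz_sub x.1.1 x.2),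
    ofL [x.1.2], rfl, sle_refl _⟩
  rz_up _ := upClo_upward

lemma cover_partitioned (P : HAsmObj) : Partitioned (coverObj P) :=
  fun x => ⟨x.1.2, rfl⟩

/-- The flattening tracker code. -/
lemma exists_flatten_code : ∃ c, ∀ n : ℕ, kap c n = Part.some (ofL ((toL n).map toL).flatten) := by
  have : Primrec fun n : ℕ => ofL ((toL n).map toL).flatten :=
    Primrec.encode.comp (Primrec.list_flatten.comp
      (Primrec.list_map (Primrec.ofNat (List ℕ))
        ((Primrec.ofNat (List ℕ)).comp Primrec.snd).to₂))
  obtain ⟨c, hc⟩ := exists_kap_eq (Nat.Partrec.of_primrec (Primrec.nat_iff.mp this))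
  exact ⟨c, fun n => hc n⟩

lemma flatten_bang {A : Set ℕ} {n : ℕ} (hn : n ∈ bang (bang A)) :
    ofL ((toL n).map toL).flatten ∈ bang A := by
  intro x hx
  rw [toL_ofL] at hx
  obtain ⟨l, hl, hxl⟩ := List.mem_flatten.mp hx
  obtain ⟨m, hm, rfl⟩ := List.mem_map.mp hl
  exact hn m hm x hxl

lemma flatten_sle {m n : ℕ} (hmn : m ∈ toL n) :
    sle m (ofL ((toL n).map toL).flatten) := by
  intro x hx
  rw [toL_ofL]
  exact List.mem_flatten.mpr ⟨toL m, List.mem_map.mpr ⟨m, hmn, rfl⟩, hx⟩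

/-- The projection from the canonical cover. -/
def coverHom (P : HAsmObj) : coverObj P ⟶ P := by
  refine ⟨fun x => x.1.1, ?_⟩
  obtain ⟨c, hc⟩ := exists_flatten_code
  refine ⟨c, ?_, ?_⟩
  · intro n hn
    exact ⟨_, by rw [hc]; exact Part.mem_some _, flatten_bang hn⟩
  · rintro x n hn
    refine ⟨_, by rw [hc]; exact Part.mem_some _, ?_⟩
    have hn' : n ∈ bang (bang P.real) ∧ x.1.2 ∈ toL n := mem_upClo_singleton.mp hn
    exact P.rz_up x.1.1 x.1.2 x.2 _ (flatten_bang hn'.1) (flatten_sle hn'.2)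

/-- The congruence object for the canonical cover. -/
def coverW (P : HAsmObj) : HAsmObj where
  carrier := {y : (coverObj P).carrier × (coverObj P).carrier // y.1.1.1 = y.2.1.1}
  real := bang P.real
  rz y := upClo (bang P.real) {ofL [y.1.1.1.2, y.1.2.1.2]}
  rz_sub _ := fun _ hn => hn.1
  rz_ne y := by
    refine ⟨ofL [y.1.1.1.2, y.1.2.1.2], ?_, ofL [y.1.1.1.2, y.1.2.1.2], rfl, sle_refl _⟩
    intro x hx
    rw [toL_ofL] at hx
    simp only [List.mem_cons, List.not_mem_nil, or_false] at hx
    rcases hx with rfl | rfl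
    · exact P.rz_sub _ y.1.1.2
    · exact P.rz_sub _ y.1.2.2
  rz_up _ := upClo_upward

def coverLeft (P : HAsmObj) : coverW P ⟶ coverObj P := by
  refine ⟨fun y => y.1.1, tracks_id_fun _ _ _ (fun m hm => hm) ?_⟩
  rintro y n ⟨hn1, m0, hm0, hle⟩
  rw [Set.mem_singleton_iff] at hm0
  subst hm0
  refine ⟨hn1, ofL [y.1.1.1.2], rfl, ?_⟩
  rw [sle_singleton_iff]
  exact hle y.1.1.1.2 (by simp)

def coverRight (P : HAsmObj) : coverW P ⟶ coverObj P := by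
  refine ⟨fun y => y.1.2, tracks_id_fun _ _ _ (fun m hm => hm) ?_⟩
  rintro y n ⟨hn1, m0, hm0, hle⟩
  rw [Set.mem_singleton_iff] at hm0
  subst hm0
  refine ⟨hn1, ofL [y.1.2.1.2], rfl, ?_⟩
  rw [sle_singleton_iff]
  exact hle y.1.2.1.2 (by simp)

lemma cover_w (P : HAsmObj) : coverLeft P ≫ coverHom P = coverRight P ≫ coverHom P :=
  HHom.ext' (funext fun y => y.2)

/-- Descending a cofork along the canonical cover projection. -/
noncomputable def coverDesc (P : HAsmObj) (s : Limits.Cofork (coverLeft P) (coverRight P)) :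
    P ⟶ s.pt := by
  refine ⟨fun a => s.π.toFun ⟨(a, (P.rz_ne a).choose), (P.rz_ne a).choose_spec⟩, ?_⟩
  obtain ⟨ts, hts1, hts2⟩ := s.π.tracked
  have hsing : Computable fun n : ℕ => ofL [n] :=
    (Primrec.encode.comp ((Primrec.list_cons (α := ℕ)).comp Primrec.id
      (Primrec.const []))).to_comp
  obtain ⟨c, hc⟩ := exists_code_comp ts hsing
  refine ⟨c, ?_, ?_⟩
  · intro n hn
    obtain ⟨v, hv, hvT⟩ := hts1 (ofL [n]) (singleton_mem_bang hn)
    exact ⟨v, (hc n).symm ▸ hv, hvT⟩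
  · intro a n hn
    have hmem : ofL [n] ∈ (coverObj P).rz ⟨(a, n), hn⟩ :=
      ⟨singleton_mem_bang (P.rz_sub a hn), ofL [n], rfl, sle_refl _⟩
    obtain ⟨v, hv, hvT⟩ := hts2 ⟨(a, n), hn⟩ (ofL [n]) hmem
    refine ⟨v, (hc n).symm ▸ hv, ?_⟩
    have hcoeq : s.π.toFun ⟨(a, n), hn⟩ =
        s.π.toFun ⟨(a, (P.rz_ne a).choose), (P.rz_ne a).choose_spec⟩ :=
      congrFun (congrArg HHom.toFun s.condition)
        (⟨(⟨(a, n), hn⟩, ⟨(a, (P.rz_ne a).choose), (P.rz_ne a).choose_spec⟩), rfl⟩ :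
          (coverW P).carrier)
    show v ∈ s.pt.rz (s.π.toFun ⟨(a, (P.rz_ne a).choose), (P.rz_ne a).choose_spec⟩)
    exact hcoeq ▸ hvT

lemma cover_fac (P : HAsmObj) (s : Limits.Cofork (coverLeft P) (coverRight P)) :
    coverHom P ≫ coverDesc P s = s.π := by
  apply HHom.ext'
  funext x
  obtain ⟨⟨a, n⟩, hn⟩ := x
  show s.π.toFun ⟨(a, (P.rz_ne a).choose), (P.rz_ne a).choose_spec⟩ = s.π.toFun ⟨(a, n), hn⟩
  exact congrFun (congrArg HHom.toFun s.condition)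
    (⟨(⟨(a, (P.rz_ne a).choose), (P.rz_ne a).choose_spec⟩, ⟨(a, n), hn⟩), rfl⟩ :
      (coverW P).carrier)

/-- The canonical cover projection is a regular epimorphism. -/
noncomputable def coverRegEpi (P : HAsmObj) : RegularEpi (coverHom P) where
  W := coverW P
  left := coverLeft P
  right := coverRight P
  w := cover_w P
  isColimit := by
    refine Limits.Cofork.IsColimit.mk _ (fun s => coverDesc P s) (fun s => ?_) (fun s m hm => ?_)
    · simpa using cover_fac P s
    · apply HHom.ext'
      funext a
      have h1 := congrFun (congrArg HHom.toFun hm) (⟨(a, (P.rz_ne a).choose),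
        (P.rz_ne a).choose_spec⟩ : (coverObj P).carrier)
      exact h1
lemma projective_gives_partitioned (P : HAsmObj)
    (hproj : ∀ {B A : HAsmObj} (p : B ⟶ A), RegularEpi p → ∀ u : P ⟶ A,
      ∃ v : P ⟶ B, v ≫ p = u) :
    ∃ Q : HAsmObj, Partitioned Q ∧ Nonempty (P ≅ Q) := by
  obtain ⟨v, hv⟩ := hproj (coverHom P) (coverRegEpi P) (𝟙 P)
  have hvq : ∀ a, (coverHom P).toFun (v.toFun a) = a := fun a =>
    congrFun (congrArg HHom.toFun hv) a
  refine ⟨{ carrier := P.carrier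
            real := bang P.real
            rz := fun a => (coverObj P).rz (v.toFun a)
            rz_sub := fun a => (coverObj P).rz_sub (v.toFun a)
            rz_ne := fun a => (coverObj P).rz_ne (v.toFun a)
            rz_up := fun a => (coverObj P).rz_up (v.toFun a) }, ?_, ?_⟩
  · exact fun a => ⟨(v.toFun a).1.2, rfl⟩
  · obtain ⟨r, hr1, hr2⟩ := v.tracked
    obtain ⟨c, hc1, hc2⟩ := (coverHom P).tracked
    refine ⟨⟨⟨id, r, hr1, fun b m hm => hr2 b m hm⟩,
      ⟨id, c, hc1, fun b m hm => ?_⟩, HHom.ext' rfl, HHom.ext' rfl⟩⟩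
    have := hc2 (v.toFun b) m hm
    rwa [hvq b] at this

theorem projective_iff_partitioned' (P : HAsmObj) :
    (∀ {B A : HAsmObj} (p : B ⟶ A), RegularEpi p → ∀ u : P ⟶ A, ∃ v : P ⟶ B, v ≫ p = u) ↔
    ∃ Q : HAsmObj, Partitioned Q ∧ Nonempty (P ≅ Q) := by
  constructor
  · exact projective_gives_partitioned P
  · rintro ⟨Q, hQ, ⟨i⟩⟩ B A p hp u
    obtain ⟨v', hv'⟩ := partitioned_projective hQ p hp (i.inv ≫ u)
    refine ⟨i.hom ≫ v', ?_⟩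
    rw [Category.assoc, hv', ← Category.assoc, i.hom_inv_id, Category.id_comp]
/-- an object of `HAsm` is projective with respect to regular epimorphisms
iff it is isomorphic to a partitioned Herbrand assembly. -/
theorem projective_iff_partitioned (P : HAsmObj) :
    (∀ {B A : HAsmObj} (p : B ⟶ A), RegularEpi p → ∀ u : P ⟶ A, ∃ v : P ⟶ B, v ≫ p = u) ↔
    ∃ Q : HAsmObj, Partitioned Q ∧ Nonempty (P ≅ Q) := by
  exact projective_iff_partitioned' P

end Herbrand
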